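/- Suppose the validity predicate valid satisfies persistent validity. Let S : List Op and let K : List Op be a list of operations whose issuers are pairwise distinct and such that valid S op holds for every op in K. Then for every index r < K.length, valid (S ++ K.take r) (K.get r) holds; that is, appending the operations of K to S in any order keeps every operation of K valid at its position. -/

import Mathlib

/-- If `valid` satisfies persistent validity, then a state `S` can be extended
with a batch `K` of valid operations with pairwise-distinct issuers, in any
order, keeping every operation of `K` valid at its position. -/
theorem persistent_validity_batch_extension {Op I : Type}
    (issuer : Op → I) (valid : List Op → Op → Prop)
    (hPV : ∀ (S : List Op) (op op' : Op), issuer op ≠ issuer op' →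
      valid S op → valid S op' → valid (S ++ [op']) op)
    (S K : List Op)
    (hdistinct : K.Pairwise fun a b => issuer a ≠ issuer b)
    (hvalid : ∀ op ∈ K, valid S op) :
    ∀ (r : ℕ) (hr : r < K.length), valid (S ++ K.take r) (K.get ⟨r, hr⟩) := by
  have hpw := List.pairwise_iff_getElem.mp hdistinct
  -- elements of a prefix have distinct issuers from later elements
  have hprefix : ∀ (n : ℕ) (hn : n < K.length), ∀ x ∈ K.take n,
      issuer x ≠ issuer (K.get ⟨n, hn⟩) := by
    intro n hn x hx
    obtain ⟨i, hi, hxi⟩ := List.mem_iff_getElem.mp hx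
    have hi' : i < n := lt_of_lt_of_le hi (by simp [List.length_take])
    have hiK : i < K.length := lt_trans hi' hn
    have h := hpw i n hiK hn hi'
    simpa [List.get_eq_getElem, ← hxi, List.getElem_take] using h
  have key : ∀ r, r ≤ K.length → ∀ op ∈ K,
      (∀ x ∈ K.take r, issuer x ≠ issuer op) → valid (S ++ K.take r) op := by
    intro r
    induction r with
    | zero => intro _ op hop _; simpa using hvalid op hop
    | succ n ih =>
      intro hn op hop hne
      have hnlt : n < K.length := hn
      have htake : K.take (n + 1) = K.take n ++ [K.get ⟨n, hnlt⟩] := by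
        rw [List.take_succ]
        simp [List.getElem?_eq_getElem hnlt]
      have hsub : ∀ x ∈ K.take n, issuer x ≠ issuer op := by
        intro x hx
        exact hne x (by rw [htake]; exact List.mem_append_left _ hx)
      have h1 : valid (S ++ K.take n) op := ih (le_of_lt hn) op hop hsub
      have h2 : valid (S ++ K.take n) (K.get ⟨n, hnlt⟩) :=
        ih (le_of_lt hn) _ (K.get_mem _) (hprefix n hnlt)
      have hneq : issuer op ≠ issuer (K.get ⟨n, hnlt⟩) := by
        have := hne (K.get ⟨n, hnlt⟩) (by rw [htake]; exact List.mem_append_right _ (List.mem_singleton_self _))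
        exact fun h => this h.symm
      have := hPV (S ++ K.take n) op (K.get ⟨n, hnlt⟩) hneq h1 h2
      rwa [htake, ← List.append_assoc]
  intro r hr
  exact key r (le_of_lt hr) _ (K.get_mem _) (hprefix r hr)
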